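/- Let L′ be a first-order language and let I be an infinite locally finite L′-structure. Suppose that for every first-order language L, every L-structure M, and every family (a_i)_{i∈I} of elements of M, there exist an L-structure N and a family (b_i)_{i∈I} of elements of N that is I-indiscernible and locally based on (a_i)_{i∈I}. Then age(I) has the embedding Ramsey property. -/
import Mathlib


open FirstOrder CategoryTheory

universe u₁ v₁ u₂ v₂ w w₂

/-- `C → (B)^A_r`: for every coloring of the embeddings of `A` into `C` with `r` colors there
is an embedding `f` of `B` into `C` such that the coloring is constant on
`{f ∘ e : e ∈ Emb(A,B)}`. -/
def ArrowsERP (L : FirstOrder.Language.{u₁, v₁}) (A B C : CategoryTheory.Bundled.{w} L.Structure)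
    (r : ℕ) : Prop :=
  ∀ χ : (A ↪[L] C) → Fin r, ∃ f : B ↪[L] C,
    ∀ e e' : A ↪[L] B, χ (f.comp e) = χ (f.comp e')

/-- A class `K` of `L`-structures has the embedding Ramsey property if for all `A, B ∈ K` with
`A` (isomorphic to) a substructure of `B` (i.e. `A` embeds into `B`) and every number of
colors `r` there is `C ∈ K` with `C → (B)^A_r`. -/
def HasERP (L : FirstOrder.Language.{u₁, v₁})
    (K : Set (CategoryTheory.Bundled.{w} L.Structure)) : Prop :=
  ∀ A ∈ K, ∀ B ∈ K, Nonempty (A ↪[L] B) → ∀ r : ℕ, ∃ C ∈ K, ArrowsERP L A B C r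

/-- The finite tuples `i` and `j` from `I` have the same quantifier-free type. -/
def SameQftp (L' : FirstOrder.Language.{u₁, v₁}) (I : Type w) [L'.Structure I] {n : ℕ}
    (i j : Fin n → I) : Prop :=
  ∀ φ : L'.Formula (Fin n), FirstOrder.Language.BoundedFormula.IsQF φ →
    (φ.Realize i ↔ φ.Realize j)

/-- The family `(b_i)_{i∈I}` of elements of `N` is `I`-indiscernible: finite tuples of indices
with the same quantifier-free type in `I` give tuples satisfying the same `L`-formulas. -/
def IsIndiscernible (L' : FirstOrder.Language.{u₁, v₁})
    (L : FirstOrder.Language.{max u₁ u₂, max v₁ v₂})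
    (I : Type w) [L'.Structure I] (N : Type*) [L.Structure N] (b : I → N) : Prop :=
  ∀ (n : ℕ) (i j : Fin n → I), SameQftp L' I i j →
    ∀ ψ : L.Formula (Fin n), (ψ.Realize (b ∘ i) ↔ ψ.Realize (b ∘ j))

/-- The family `(b_i)_{i∈I}` of elements of `N` is locally based on the family `(a_i)_{i∈I}`
of elements of `M`: for every finite set `Δ` of `L`-formulas and every finite tuple `j` from
`I` there is a tuple `i` from `I` with the same quantifier-free type such that each `φ ∈ Δ`
holds of `(b_j)` in `N` iff it holds of `(a_i)` in `M`. -/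
def LocallyBasedOn (L' : FirstOrder.Language.{u₁, v₁})
    (L : FirstOrder.Language.{max u₁ u₂, max v₁ v₂})
    (I : Type w) [L'.Structure I] (M : Type*) [L.Structure M] (N : Type*) [L.Structure N]
    (a : I → M) (b : I → N) : Prop :=
  ∀ (n : ℕ) (Δ : Set (L.Formula (Fin n))), Δ.Finite → ∀ j : Fin n → I,
    ∃ i : Fin n → I, SameQftp L' I i j ∧
      ∀ φ ∈ Δ, (φ.Realize (b ∘ j) ↔ φ.Realize (a ∘ i))

section ScowAux

open FirstOrder.Language FirstOrder.Language.Structure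

namespace ScowAux

variable {L : FirstOrder.Language} {M : Type*} {N : Type*} [L.Structure M] [L.Structure N]

theorem realize_emb_of_isQF (g : M ↪[L] N) {α : Type*} {n : ℕ}
    {φ : L.BoundedFormula α n} (hφ : φ.IsQF) :
    ∀ {v : α → M} {xs : Fin n → M}, φ.Realize (g ∘ v) (g ∘ xs) ↔ φ.Realize v xs := by
  induction hφ with
  | falsum => intro v xs; exact Iff.rfl
  | of_isAtomic h =>
    intro v xs
    cases h with
    | equal t₁ t₂ =>
      simp only [BoundedFormula.realize_bdEqual, ← Sum.comp_elim, HomClass.realize_term]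
      exact ⟨fun h => g.injective h, fun h => congrArg g h⟩
    | rel R ts =>
      simp only [BoundedFormula.realize_rel, ← Sum.comp_elim, HomClass.realize_term]
      exact g.map_rel R _
  | imp _ _ ih1 ih2 =>
    intro v xs
    simp only [BoundedFormula.realize_imp, ih1, ih2]

theorem realize_emb_formula_of_isQF (g : M ↪[L] N) {α : Type*}
    {φ : L.Formula α} (hφ : φ.IsQF) {v : α → M} :
    φ.Realize (g ∘ v) ↔ φ.Realize v := by
  have h : (g ∘ (default : Fin 0 → M)) = default := Subsingleton.elim _ _
  have h2 := realize_emb_of_isQF g hφ (v := v) (xs := default)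
  rw [h] at h2
  exact h2

theorem finite_of_fg_emb {L' : FirstOrder.Language} {I : Type*} [L'.Structure I]
    (hlf : ∀ S : L'.Substructure I, S.FG → (S : Set I).Finite)
    {A : Type*} [L'.Structure A] (hfg : Structure.FG L' A) (g : A ↪[L'] I) : Finite A := by
  have hr : ((g.toHom.range : L'.Substructure I) : Set I).Finite := hlf _ (hfg.range g.toHom)
  haveI := hr.to_subtype
  exact Finite.of_injective
    (fun a => (⟨g a, Hom.mem_range.2 ⟨a, rfl⟩⟩ : g.toHom.range))
    (fun a b hab => g.injective (congrArg Subtype.val hab))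

end ScowAux

theorem ScowAux.sameQftp_comp_emb {L' : FirstOrder.Language.{u₁, v₁}} {I : Type w}
    [L'.Structure I] {A : Type*} [L'.Structure A] {n : ℕ} (w' : Fin n → A)
    (e e' : A ↪[L'] I) :
    SameQftp L' I (⇑e ∘ w') (⇑e' ∘ w') :=
  fun _φ hφ => (ScowAux.realize_emb_formula_of_isQF e hφ).trans
    (ScowAux.realize_emb_formula_of_isQF e' hφ).symm

theorem ScowAux.embedding_of_sameQftp {L' : FirstOrder.Language.{u₁, v₁}} {I : Type w}
    [L'.Structure I] {B : Type*} [L'.Structure B] {n : ℕ} (eB : Fin n ≃ B) (g : B ↪[L'] I)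
    {i : Fin n → I} (hij : SameQftp L' I i (fun t => g (eB t))) :
    ∃ h : B ↪[L'] I, ∀ t, h (eB t) = i t := by
  set j : Fin n → I := fun t => g (eB t) with hj
  have hinj : Function.Injective (fun z : B => i (eB.symm z)) := by
    intro x y hxy
    have hq := hij (FirstOrder.Language.Term.equal (FirstOrder.Language.Term.var (eB.symm x))
        (FirstOrder.Language.Term.var (eB.symm y)))
      (FirstOrder.Language.BoundedFormula.IsQF.of_isAtomic
        (FirstOrder.Language.BoundedFormula.IsAtomic.equal _ _))
    simp only [FirstOrder.Language.Formula.realize_equal,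
      FirstOrder.Language.Term.realize_var] at hq
    have h1 : j (eB.symm x) = j (eB.symm y) := hq.mp hxy
    simp only [hj, Equiv.apply_symm_apply] at h1
    exact g.injective h1
  refine ⟨⟨⟨fun z => i (eB.symm z), hinj⟩, ?_, ?_⟩, fun t => by
    show i (eB.symm (eB t)) = i t
    rw [Equiv.symm_apply_apply]⟩
  · intro m F x
    have hq := hij (FirstOrder.Language.Term.equal
        (FirstOrder.Language.Term.func F fun q => FirstOrder.Language.Term.var (eB.symm (x q)))
        (FirstOrder.Language.Term.var (eB.symm (funMap F x))))
      (FirstOrder.Language.BoundedFormula.IsQF.of_isAtomic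
        (FirstOrder.Language.BoundedFormula.IsAtomic.equal _ _))
    simp only [FirstOrder.Language.Formula.realize_equal,
      FirstOrder.Language.Term.realize_func, FirstOrder.Language.Term.realize_var] at hq
    have hjside : funMap F (fun q => j (eB.symm (x q))) = j (eB.symm (funMap F x)) := by
      simp only [hj, Equiv.apply_symm_apply]
      exact (g.map_fun F x).symm
    exact (hq.mpr hjside).symm
  · intro m R x
    have hq := hij (FirstOrder.Language.Relations.formula R
        fun q => FirstOrder.Language.Term.var (eB.symm (x q)))
      (FirstOrder.Language.BoundedFormula.IsQF.of_isAtomic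
        (FirstOrder.Language.BoundedFormula.IsAtomic.rel _ _))
    simp only [FirstOrder.Language.Formula.realize_rel,
      FirstOrder.Language.Term.realize_var] at hq
    have hjside : RelMap R (fun q => j (eB.symm (x q))) ↔ RelMap R x := by
      simp only [hj, Equiv.apply_symm_apply]
      exact g.map_rel R x
    exact hq.trans hjside

theorem ScowAux.exists_global_coloring {L' : FirstOrder.Language.{u₁, v₁}} {I : Type w}
    [L'.Structure I] (hlf : ∀ S : L'.Substructure I, S.FG → (S : Set I).Finite)
    (A B : CategoryTheory.Bundled.{w} L'.Structure) [Finite ↥A] [Finite ↥B]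
    (r : ℕ) (hr : 0 < r)
    (hbad : ∀ C ∈ L'.age I, ¬ ArrowsERP L' A B C r) :
    ∃ c : (↥A ↪[L'] I) → Fin r, ∀ f : ↥B ↪[L'] I,
      ∃ e e' : ↥A ↪[L'] ↥B, c (f.comp e) ≠ c (f.comp e') := by
  classical
  letI : TopologicalSpace (Fin r) := ⊥
  haveI : DiscreteTopology (Fin r) := ⟨rfl⟩
  haveI : Finite (↥A ↪[L'] ↥B) := Finite.of_injective _ DFunLike.coe_injective
  let Z : (↥B ↪[L'] I) → Set ((↥A ↪[L'] I) → Fin r) := fun f =>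
    ⋃ p : (↥A ↪[L'] ↥B) × (↥A ↪[L'] ↥B), {c | c (f.comp p.1) ≠ c (f.comp p.2)}
  have hZc : ∀ f, IsClosed (Z f) := by
    intro f
    refine isClosed_iUnion_of_finite fun p => ?_
    have hcont : Continuous fun c : (↥A ↪[L'] I) → Fin r =>
        (c (f.comp p.1), c (f.comp p.2)) :=
      (continuous_apply _).prodMk (continuous_apply _)
    exact (isClosed_discrete {q : Fin r × Fin r | q.1 ≠ q.2}).preimage hcont
  have hne : (⋂ f, Z f).Nonempty := by
    by_contra hcon
    rw [Set.not_nonempty_iff_eq_empty] at hcon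
    have hempty : (Set.univ ∩ ⋂ f, Z f) = ∅ := by rw [Set.univ_inter]; exact hcon
    obtain ⟨t, ht⟩ := IsCompact.elim_finite_subfamily_closed isCompact_univ Z hZc hempty
    have hUfin : (⋃ f ∈ t, Set.range (f : ↥B → I)).Finite :=
      t.finite_toSet.biUnion fun f _ => Set.finite_range _
    set S : L'.Substructure I :=
      FirstOrder.Language.Substructure.closure L' (⋃ f ∈ t, Set.range (f : ↥B → I)) with hS
    have hSfin : (S : Set I).Finite :=
      hlf S (FirstOrder.Language.Substructure.fg_closure hUfin)
    haveI : Finite S := hSfin.to_subtype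
    let C : CategoryTheory.Bundled.{w} L'.Structure := ⟨S, inferInstance⟩
    have hC : C ∈ L'.age I := ⟨Structure.FG.of_finite, ⟨S.subtype⟩⟩
    have h1 : ∃ χ : (↥A ↪[L'] C) → Fin r, ∀ f : ↥B ↪[L'] C,
        ∃ e e' : ↥A ↪[L'] ↥B, χ (f.comp e) ≠ χ (f.comp e') := by
      have h2 := hbad C hC
      unfold ArrowsERP at h2
      push_neg at h2
      exact h2
    obtain ⟨χ, hχ⟩ := h1
    let c : (↥A ↪[L'] I) → Fin r := fun e =>
      if h : ∀ x, e x ∈ S then χ (FirstOrder.Language.Embedding.codRestrict S e h) else ⟨0, hr⟩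
    have hcmem : c ∈ Set.univ ∩ ⋂ f ∈ t, Z f := by
      refine ⟨Set.mem_univ _, Set.mem_iInter₂.2 fun f hf => ?_⟩
      have hfS : ∀ x : ↥B, f x ∈ S :=
        fun x => FirstOrder.Language.Substructure.subset_closure
          (Set.mem_biUnion hf (Set.mem_range_self x))
      obtain ⟨e, e', hee⟩ := hχ (FirstOrder.Language.Embedding.codRestrict S f hfS)
      refine Set.mem_iUnion.2 ⟨(e, e'), ?_⟩
      have hkey : ∀ e₀ : ↥A ↪[L'] ↥B, c (f.comp e₀) =
          χ ((FirstOrder.Language.Embedding.codRestrict S f hfS).comp e₀) := by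
        intro e₀
        have hmem : ∀ x, (f.comp e₀) x ∈ S := fun x => hfS (e₀ x)
        have hd : c (f.comp e₀) =
            χ (FirstOrder.Language.Embedding.codRestrict S (f.comp e₀) hmem) := dif_pos hmem
        rw [hd]
        congr 1
      show c (f.comp e) ≠ c (f.comp e')
      rw [hkey e, hkey e']
      exact hee
    rw [ht] at hcmem
    exact absurd hcmem (by simp)
  obtain ⟨c, hc⟩ := hne
  refine ⟨c, fun f => ?_⟩
  have hm := Set.mem_iInter.1 hc f
  obtain ⟨p, hp⟩ := Set.mem_iUnion.1 hm
  exact ⟨p.1, p.2, hp⟩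

end ScowAux

/-- If `I` is an infinite locally finite `L'`-structure such that for every language `L`,
every `L`-structure `M`, and every family `(a_i)_{i∈I}` of elements of `M` there are an
`L`-structure `N` and an `I`-indiscernible family `(b_i)_{i∈I}` of elements of `N` locally
based on `(a_i)_{i∈I}`, then the age of `I` has the embedding Ramsey property. -/
theorem statement12 (L' : FirstOrder.Language.{u₁, v₁}) (I : Type w) [L'.Structure I]
    [Infinite I] (hlf : ∀ S : L'.Substructure I, S.FG → (S : Set I).Finite)
    (hmp : ∀ (L : FirstOrder.Language.{max u₁ u₂, max v₁ v₂}) (M : Type (max w w₂))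
      [L.Structure M] (a : I → M),
      ∃ (N : Type (max u₁ u₂ v₁ v₂ w w₂)) (iN : L.Structure N),
        letI := iN
        ∃ b : I → N, IsIndiscernible L' L I N b ∧ LocallyBasedOn L' L I M N a b) :
    HasERP L' (L'.age I) := by
  classical
  intro A hA B hB hAB r
  by_contra hcon
  push_neg at hcon
  haveI hFA : Finite ↥A := ScowAux.finite_of_fg_emb hlf hA.1 hA.2.some
  haveI hFB : Finite ↥B := ScowAux.finite_of_fg_emb hlf hB.1 hB.2.some
  rcases Nat.eq_zero_or_pos r with hr | hr
  · subst hr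
    have h2 := hcon A hA
    unfold ArrowsERP at h2
    push_neg at h2
    obtain ⟨χ, -⟩ := h2
    exact (χ (FirstOrder.Language.Embedding.refl L' ↥A)).elim0
  obtain ⟨c, hc⟩ := ScowAux.exists_global_coloring hlf A B r hr hcon
  obtain ⟨gB⟩ := hB.2
  haveI := Fintype.ofFinite ↥A
  haveI := Fintype.ofFinite ↥B
  set nA := Fintype.card ↥A with hnAdef
  set nB := Fintype.card ↥B with hnBdef
  let eA : Fin nA ≃ ↥A := (Fintype.equivFin ↥A).symm
  let eB : Fin nB ≃ ↥B := (Fintype.equivFin ↥B).symm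
  let L₂ : FirstOrder.Language.{u₂, v₂} :=
    ⟨fun _ => PEmpty, fun m => ULift.{v₂} (Fin r) × PLift (m = nA)⟩
  let L : FirstOrder.Language.{max u₁ u₂, max v₁ v₂} := L'.sum L₂
  letI iM' : L'.Structure (ULift.{w₂, w} I) := Equiv.ulift.symm.inducedStructure
  letI iM₂ : L₂.Structure (ULift.{w₂, w} I) :=
    ⟨fun {m} F _ => PEmpty.elim F,
     fun {m} R x => ∃ ε : ↥A ↪[L'] I, c ε = R.1.down ∧
       ∀ t : Fin nA, (x (Fin.cast R.2.down.symm t)).down = ε (eA t)⟩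
  letI iM : L.Structure (ULift.{w₂, w} I) := FirstOrder.Language.sumStructure L' L₂ _
  obtain ⟨N, iN, b, hind, hbase⟩ := hmp L (ULift.{w₂, w} I) ULift.up
  letI := iN
  let RK : Fin r → L.Relations nA := fun k => Sum.inr ⟨⟨k⟩, ⟨rfl⟩⟩
  let σ : (↥A ↪[L'] ↥B) → Fin nA → Fin nB := fun e t => eB.symm (e (eA t))
  let Φ : Fin r → (↥A ↪[L'] ↥B) → L.Formula (Fin nB) :=
    fun k e => (RK k).formula fun t => FirstOrder.Language.Term.var (σ e t)
  haveI : Finite (↥A ↪[L'] ↥B) := Finite.of_injective _ DFunLike.coe_injective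
  have hΔfin : (Set.range fun p : Fin r × (↥A ↪[L'] ↥B) => Φ p.1 p.2).Finite :=
    Set.finite_range _
  set j : Fin nB → I := fun t => gB (eB t) with hjdef
  obtain ⟨i, hij, htr⟩ := hbase nB _ hΔfin j
  obtain ⟨h, hh⟩ := ScowAux.embedding_of_sameQftp eB gB hij
  have hcomp : ∀ (e : ↥A ↪[L'] ↥B) (t : Fin nA), i (σ e t) = (h.comp e) (eA t) := by
    intro e t
    rw [← hh (σ e t)]
    show h (eB (eB.symm (e (eA t)))) = h (e (eA t))
    rw [Equiv.apply_symm_apply]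
  have hMreal : ∀ (k : Fin r) (e : ↥A ↪[L'] ↥B),
      ((Φ k e).Realize (ULift.up ∘ i) ↔ c (h.comp e) = k) := by
    intro k e
    have hshow : (Φ k e).Realize (ULift.up ∘ i) ↔
        FirstOrder.Language.Structure.RelMap (RK k) fun t =>
          (FirstOrder.Language.Term.var (σ e t)).realize (ULift.up ∘ i) :=
      FirstOrder.Language.Formula.realize_rel
    rw [hshow]
    show (∃ ε : ↥A ↪[L'] I, c ε = k ∧ ∀ t : Fin nA, i (σ e t) = ε (eA t)) ↔
      c (h.comp e) = k
    constructor
    · rintro ⟨ε, hck, hεt⟩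
      have hεeq : ε = h.comp e := by
        ext x
        have hx := hεt (eA.symm x)
        rw [Equiv.apply_symm_apply] at hx
        rw [← hx, hcomp e (eA.symm x), Equiv.apply_symm_apply]
      rw [← hεeq]
      exact hck
    · intro hk
      exact ⟨h.comp e, hk, fun t => hcomp e t⟩
  have hNreal : ∀ (k : Fin r) (e : ↥A ↪[L'] ↥B),
      ((Φ k e).Realize (b ∘ j) ↔ c (h.comp e) = k) :=
    fun k e => (htr _ ⟨(k, e), rfl⟩).trans (hMreal k e)
  obtain ⟨e, e', hee⟩ := hc h
  have h2 : (Φ (c (h.comp e')) e').Realize (b ∘ j) := (hNreal _ e').mpr rfl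
  have h1 : ¬ (Φ (c (h.comp e')) e).Realize (b ∘ j) :=
    fun hcon2 => hee ((hNreal _ e).mp hcon2)
  have hjσ : ∀ e₀ : ↥A ↪[L'] ↥B, j ∘ σ e₀ = ⇑(gB.comp e₀) ∘ (fun t => eA t) := by
    intro e₀
    funext t
    show gB (eB (eB.symm (e₀ (eA t)))) = gB (e₀ (eA t))
    rw [Equiv.apply_symm_apply]
  have hsq : SameQftp L' I (j ∘ σ e) (j ∘ σ e') := by
    rw [hjσ e, hjσ e']
    exact ScowAux.sameQftp_comp_emb _ (gB.comp e) (gB.comp e')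
  have hiff := hind nA (j ∘ σ e) (j ∘ σ e') hsq
    ((RK (c (h.comp e'))).formula fun t => FirstOrder.Language.Term.var t)
  have hred : ∀ e₀ : ↥A ↪[L'] ↥B,
      ((((RK (c (h.comp e'))).formula fun t => FirstOrder.Language.Term.var t).Realize
        (b ∘ (j ∘ σ e₀))) ↔ (Φ (c (h.comp e')) e₀).Realize (b ∘ j)) := by
    intro e₀
    rw [FirstOrder.Language.Formula.realize_rel]
    have hshow : (Φ (c (h.comp e')) e₀).Realize (b ∘ j) ↔
        FirstOrder.Language.Structure.RelMap (RK (c (h.comp e'))) fun t =>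
          (FirstOrder.Language.Term.var (σ e₀ t)).realize (b ∘ j) :=
      FirstOrder.Language.Formula.realize_rel
    rw [hshow]
    exact Iff.rfl
  exact h1 ((hred e).mp (hiff.mpr ((hred e').mpr h2)))
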